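/- The clique simplices of the canonical bipartite framing form a triangulation of the flow polytope F₁(G(H)); precisely: (i) for every clique C of routes of G(H), the indicator vectors {v_r : r ∈ C} are affinely independent; (ii) F₁(G(H)) is the union, over all maximal cliques C, of the simplices conv{v_r : r ∈ C}; and (iii) for any two cliques C and C', conv{v_r : r ∈ C} ∩ conv{v_r : r ∈ C'} = conv{v_r : r ∈ C ∩ C'}. -/

import Mathlib

open Finset Filter Pointwise

/-- Neighbors in the right shore `T` of a left vertex `i`. -/
def Nbr (E : Finset (ℕ × ℕ)) (i : ℕ) : Finset ℕ :=
  (E.filter (fun p => p.1 = i)).image Prod.snd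

/-- Neighbors in the left shore `S` of a right vertex `j`. -/
def Nbr' (E : Finset (ℕ × ℕ)) (j : ℕ) : Finset ℕ :=
  (E.filter (fun p => p.2 = j)).image Prod.fst

/-- A route of `G(H)`: a triple `(a, (i,j), c)` with `a, c ∈ {1,2}`, `(i,j) ∈ E`,
representing the path `α_{a,i} β_{i,j} γ_{j,c}`. -/
abbrev Route : Type := ℕ × (ℕ × ℕ) × ℕ

def IsRoute (E : Finset (ℕ × ℕ)) (r : Route) : Prop :=
  (r.1 = 1 ∨ r.1 = 2) ∧ r.2.1 ∈ E ∧ (r.2.2 = 1 ∨ r.2.2 = 2)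

/-- Two routes are in conflict with respect to the canonical bipartite framing. -/
def Conflict (r r' : Route) : Prop :=
  (r.2.1 = r'.2.1 ∧
    ((r.1 = 1 ∧ r.2.2 = 2 ∧ r'.1 = 2 ∧ r'.2.2 = 1) ∨
     (r.1 = 2 ∧ r.2.2 = 1 ∧ r'.1 = 1 ∧ r'.2.2 = 2))) ∨
  (r.2.1.1 = r'.2.1.1 ∧ r.2.1.2 ≠ r'.2.1.2 ∧
    ((r.2.1.2 < r'.2.1.2 ∧ r'.1 = 1 ∧ r.1 = 2) ∨
     (r'.2.1.2 < r.2.1.2 ∧ r.1 = 1 ∧ r'.1 = 2))) ∨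
  (r.2.1.2 = r'.2.1.2 ∧ r.2.1.1 ≠ r'.2.1.1 ∧
    ((r.2.1.1 < r'.2.1.1 ∧ r.2.2 = 2 ∧ r'.2.2 = 1) ∨
     (r'.2.1.1 < r.2.1.1 ∧ r'.2.2 = 2 ∧ r.2.2 = 1)))

/-- A clique: a set of pairwise coherent routes. -/
def IsClique (E : Finset (ℕ × ℕ)) (C : Set Route) : Prop :=
  (∀ r ∈ C, IsRoute E r) ∧ ∀ r ∈ C, ∀ r' ∈ C, r ≠ r' → ¬ Conflict r r'

/-- A maximal clique of routes. -/
def IsMaxClique (E : Finset (ℕ × ℕ)) (C : Set Route) : Prop :=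
  IsClique E C ∧ ∀ C' : Set Route, IsClique E C' → C ⊆ C' → C' = C

/-- Edges of the extension `G(H)`:
`Sum.inl (a,i)` is `α_{a,i}`, `Sum.inr (Sum.inl (i,j))` is `β_{i,j}`,
`Sum.inr (Sum.inr (j,c))` is `γ_{j,c}`. -/
abbrev GEdge : Type := (ℕ × ℕ) ⊕ ((ℕ × ℕ) ⊕ (ℕ × ℕ))

def IsGEdge (n m : ℕ) (E : Finset (ℕ × ℕ)) : GEdge → Prop
  | Sum.inl q => (q.1 = 1 ∨ q.1 = 2) ∧ q.2 ∈ Finset.Icc 1 n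
  | Sum.inr (Sum.inl p) => p ∈ E
  | Sum.inr (Sum.inr q) => q.1 ∈ Finset.Icc 1 m ∧ (q.2 = 1 ∨ q.2 = 2)

/-- The flow polytope `F₁(G(H))` of unit flows on `G(H)`. -/
def FlowPolytope (n m : ℕ) (E : Finset (ℕ × ℕ)) : Set (GEdge → ℝ) :=
  { x | (∀ e : GEdge, IsGEdge n m E e → 0 ≤ x e) ∧
        (∀ e : GEdge, ¬ IsGEdge n m E e → x e = 0) ∧
        (∀ i ∈ Finset.Icc 1 n,
          x (Sum.inl (1, i)) + x (Sum.inl (2, i)) =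
            ∑ j ∈ Nbr E i, x (Sum.inr (Sum.inl (i, j)))) ∧
        (∀ j ∈ Finset.Icc 1 m,
          (∑ i ∈ Nbr' E j, x (Sum.inr (Sum.inl (i, j)))) =
            x (Sum.inr (Sum.inr (j, 1))) + x (Sum.inr (Sum.inr (j, 2)))) ∧
        (∑ i ∈ Finset.Icc 1 n, (x (Sum.inl (1, i)) + x (Sum.inl (2, i)))) = 1 }

/-- Nonnegative integer flows of size `t` on `G(H)`, i.e., lattice points of the
`t`-th dilate of `F₁(G(H))`. -/
def IntFlows (n m : ℕ) (E : Finset (ℕ × ℕ)) (t : ℕ) : Set (GEdge → ℕ) :=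
  { x | (∀ e : GEdge, ¬ IsGEdge n m E e → x e = 0) ∧
        (∀ i ∈ Finset.Icc 1 n,
          x (Sum.inl (1, i)) + x (Sum.inl (2, i)) =
            ∑ j ∈ Nbr E i, x (Sum.inr (Sum.inl (i, j)))) ∧
        (∀ j ∈ Finset.Icc 1 m,
          (∑ i ∈ Nbr' E j, x (Sum.inr (Sum.inl (i, j)))) =
            x (Sum.inr (Sum.inr (j, 1))) + x (Sum.inr (Sum.inr (j, 2)))) ∧
        (∑ i ∈ Finset.Icc 1 n, (x (Sum.inl (1, i)) + x (Sum.inl (2, i)))) = t }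

/-- The indicator vector of a route. -/
def routeVec (r : Route) : GEdge → ℝ := fun e =>
  if e = Sum.inl (r.1, r.2.1.1) ∨ e = Sum.inr (Sum.inl r.2.1) ∨
     e = Sum.inr (Sum.inr (r.2.1.2, r.2.2)) then 1 else 0


lemma mem_Nbr {E : Finset (ℕ × ℕ)} {i j : ℕ} : j ∈ Nbr E i ↔ (i, j) ∈ E := by
  simp only [Nbr, Finset.mem_image, Finset.mem_filter]
  constructor
  · rintro ⟨⟨a, b⟩, ⟨h, rfl⟩, rfl⟩; exact h
  · intro h; exact ⟨(i, j), ⟨h, rfl⟩, rfl⟩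

lemma mem_Nbr' {E : Finset (ℕ × ℕ)} {i j : ℕ} : i ∈ Nbr' E j ↔ (i, j) ∈ E := by
  simp only [Nbr', Finset.mem_image, Finset.mem_filter]
  constructor
  · rintro ⟨⟨a, b⟩, ⟨h, rfl⟩, rfl⟩; exact h
  · intro h; exact ⟨(i, j), ⟨h, rfl⟩, rfl⟩

lemma sum_Nbr (E : Finset (ℕ × ℕ)) (i : ℕ) (f : ℕ × ℕ → ℝ) :
    ∑ j ∈ Nbr E i, f (i, j) = ∑ p ∈ E.filter (fun p => p.1 = i), f p := by
  rw [Nbr, Finset.sum_image]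
  · apply Finset.sum_congr rfl
    intro p hp
    simp only [Finset.mem_filter] at hp
    rw [show (i, p.2) = p from by rw [← hp.2]]
  · intro p hp q hq h
    simp only [Finset.mem_coe, Finset.mem_filter] at hp hq
    exact Prod.ext (hp.2.trans hq.2.symm) h

lemma sum_Nbr' (E : Finset (ℕ × ℕ)) (j : ℕ) (f : ℕ × ℕ → ℝ) :
    ∑ i ∈ Nbr' E j, f (i, j) = ∑ p ∈ E.filter (fun p => p.2 = j), f p := by
  rw [Nbr', Finset.sum_image]
  · apply Finset.sum_congr rfl
    intro p hp
    simp only [Finset.mem_filter] at hp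
    rw [show (p.1, j) = p from by rw [← hp.2]]
  · intro p hp q hq h
    simp only [Finset.mem_coe, Finset.mem_filter] at hp hq
    exact Prod.ext h (hp.2.trans hq.2.symm)

/-- generic telescoping over a finset of naturals ordered by `<`. -/
lemma telescope (J : Finset ℕ) (b : ℕ → ℝ) (F : ℝ → ℝ) :
    ∑ j ∈ J, (F ((∑ j' ∈ J.filter (· < j), b j') + b j) - F (∑ j' ∈ J.filter (· < j), b j'))
      = F (∑ j ∈ J, b j) - F 0 := by
  induction J using Finset.induction_on_max with
  | empty => simp
  | insert a s ha ih =>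
    have hans : a ∉ s := fun h => lt_irrefl a (ha a h)
    have hfa : (insert a s).filter (· < a) = s := by
      ext x
      simp only [Finset.mem_filter, Finset.mem_insert]
      constructor
      · rintro ⟨h1 | h1, h2⟩
        · exact absurd h2 (by simp [h1])
        · exact h1
      · intro hx; exact ⟨Or.inr hx, ha x hx⟩
    have hfj : ∀ j ∈ s, (insert a s).filter (· < j) = s.filter (· < j) := by
      intro j hj
      ext x
      simp only [Finset.mem_filter, Finset.mem_insert]
      constructor
      · rintro ⟨h1 | h1, h2⟩
        · exact absurd (h2.trans (ha j hj)) (by simp [h1])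
        · exact ⟨h1, h2⟩
      · rintro ⟨h1, h2⟩; exact ⟨Or.inr h1, h2⟩
    rw [Finset.sum_insert hans, Finset.sum_insert hans, hfa]
    have : ∑ j ∈ s, (F ((∑ j' ∈ (insert a s).filter (· < j), b j') + b j)
        - F (∑ j' ∈ (insert a s).filter (· < j), b j'))
        = ∑ j ∈ s, (F ((∑ j' ∈ s.filter (· < j), b j') + b j) - F (∑ j' ∈ s.filter (· < j), b j')) := by
      apply Finset.sum_congr rfl
      intro j hj; rw [hfj j hj]
    rw [this, ih]
    ring

lemma clamp_piece (s P bj : ℝ) (hP : 0 ≤ P) (hb : 0 ≤ bj) :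
    max 0 (min bj (s - P)) = min s (P + bj) - min s P := by
  rcases le_total s P with h | h
  · rw [min_eq_left h, min_eq_left (h.trans (by linarith))]
    have : min bj (s - P) ≤ 0 := le_trans (min_le_right _ _) (by linarith)
    simp [max_eq_left this]
  · rw [min_eq_right h]
    rcases le_total s (P + bj) with h2 | h2
    · rw [min_eq_left h2]
      have h3 : min bj (s - P) = s - P := min_eq_right (by linarith)
      rw [h3, max_eq_right (by linarith)]
    · rw [min_eq_right h2]
      have h3 : min bj (s - P) = bj := min_eq_left (by linarith)
      rw [h3, max_eq_right hb]
      ring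

lemma sum_clamp (J : Finset ℕ) (b : ℕ → ℝ) (s : ℝ) (hs : 0 ≤ s) (hb : ∀ j ∈ J, 0 ≤ b j) :
    ∑ j ∈ J, max 0 (min (b j) (s - ∑ j' ∈ J.filter (· < j), b j')) = min s (∑ j ∈ J, b j) := by
  have key : ∀ j ∈ J, max 0 (min (b j) (s - ∑ j' ∈ J.filter (· < j), b j'))
      = min s ((∑ j' ∈ J.filter (· < j), b j') + b j) - min s (∑ j' ∈ J.filter (· < j), b j') := by
    intro j hj
    apply clamp_piece
    · exact Finset.sum_nonneg fun x hx => hb x (Finset.mem_of_mem_filter x hx)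
    · exact hb j hj
  rw [Finset.sum_congr rfl key, telescope J b (fun t => min s t), min_eq_right hs, sub_zero]

/-- Threshold lemma: coherent masses on an ordered fan are clamps of prefix sums. -/
lemma threshold (J : Finset ℕ) (b M : ℕ → ℝ)
    (h0 : ∀ j ∈ J, 0 ≤ M j) (h1 : ∀ j ∈ J, M j ≤ b j)
    (hcoh : ∀ j ∈ J, ∀ j' ∈ J, j < j' → M j < b j → M j' = 0) :
    ∀ j ∈ J, M j = max 0 (min (b j) ((∑ j' ∈ J, M j') - ∑ j' ∈ J.filter (· < j), b j')) := by
  intro j hj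
  have hjne : j ∉ J.filter (j < ·) := by simp
  have hins : J.filter (fun x => ¬ x < j) = insert j (J.filter (j < ·)) := by
    ext x
    simp only [Finset.mem_filter, Finset.mem_insert]
    constructor
    · rintro ⟨hx, h⟩
      rcases eq_or_lt_of_le (not_lt.mp h) with h2 | h2
      · exact Or.inl h2.symm
      · exact Or.inr ⟨hx, h2⟩
    · rintro (rfl | ⟨hx, h⟩)
      · exact ⟨hj, lt_irrefl _⟩
      · exact ⟨hx, not_lt.mpr h.le⟩
  have hsplit : ∑ j' ∈ J, M j' = (∑ j' ∈ J.filter (· < j), M j') + (M j + ∑ j' ∈ J.filter (j < ·), M j') := by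
    rw [← Finset.sum_filter_add_sum_filter_not J (· < j) M, hins, Finset.sum_insert hjne]
  rw [hsplit]
  set P := ∑ j' ∈ J.filter (· < j), b j' with hPdef
  set T := ∑ j' ∈ J.filter (j < ·), M j' with hTdef
  set L := ∑ j' ∈ J.filter (· < j), M j' with hLdef
  have hLP : L ≤ P := Finset.sum_le_sum (fun x hx => h1 x (Finset.mem_of_mem_filter x hx))
  have hT : 0 ≤ T := Finset.sum_nonneg (fun x hx => h0 x (Finset.mem_of_mem_filter x hx))
  by_cases hpos : 0 < M j
  · have hD0 : L = P := by
      apply Finset.sum_congr rfl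
      intro x hx
      simp only [Finset.mem_filter] at hx
      by_contra hne
      have := hcoh x hx.1 j hj hx.2 (lt_of_le_of_ne (h1 x hx.1) hne)
      linarith
    by_cases hlt : M j < b j
    · have hT0 : T = 0 := Finset.sum_eq_zero (fun x hx => by
        simp only [Finset.mem_filter] at hx
        exact hcoh j hj x hx.1 hx.2 hlt)
      rw [hT0, hD0, show P + (M j + 0) - P = M j from by ring,
        min_eq_right hlt.le, max_eq_right hpos.le]
    · have heq : M j = b j := le_antisymm (h1 j hj) (not_lt.mp hlt)
      rw [hD0, show P + (M j + T) - P = M j + T from by ring,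
        min_eq_left (by linarith), max_eq_right (by linarith), heq]
  · have h00 : M j = 0 := le_antisymm (not_lt.mp hpos) (h0 j hj)
    by_cases hlt : M j < b j
    · have hT0 : T = 0 := Finset.sum_eq_zero (fun x hx => by
        simp only [Finset.mem_filter] at hx
        exact hcoh j hj x hx.1 hx.2 hlt)
      have hle : min (b j) (L + (M j + T) - P) ≤ 0 :=
        le_trans (min_le_right _ _) (by rw [h00, hT0]; linarith)
      rw [max_eq_left hle, h00]
    · have heq : b j = 0 := by linarith [le_antisymm (h1 j hj) (not_lt.mp hlt)]
      have hle : min (b j) (L + (M j + T) - P) ≤ 0 := le_trans (min_le_left _ _) (by rw [heq])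
      rw [max_eq_left hle, h00]

-- ==== chunk 2 ====
def RFin (E : Finset (ℕ × ℕ)) : Finset Route :=
  ({1, 2} : Finset ℕ) ×ˢ (E ×ˢ ({1, 2} : Finset ℕ))

lemma mem_RFin {E : Finset (ℕ × ℕ)} {r : Route} : r ∈ RFin E ↔ IsRoute E r := by
  simp [RFin, IsRoute, Finset.mem_product, and_assoc]

def xb (x : GEdge → ℝ) (p : ℕ × ℕ) : ℝ := x (Sum.inr (Sum.inl p))

def preI (E : Finset (ℕ × ℕ)) (x : GEdge → ℝ) (i j : ℕ) : ℝ :=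
  ∑ j' ∈ (Nbr E i).filter (· < j), xb x (i, j')

def preJ (E : Finset (ℕ × ℕ)) (x : GEdge → ℝ) (j i : ℕ) : ℝ :=
  ∑ i' ∈ (Nbr' E j).filter (· < i), xb x (i', j)

def Aval (E : Finset (ℕ × ℕ)) (x : GEdge → ℝ) (i j : ℕ) : ℝ :=
  max 0 (min (xb x (i, j)) (x (Sum.inl (1, i)) - preI E x i j))

def Bval (E : Finset (ℕ × ℕ)) (x : GEdge → ℝ) (i j : ℕ) : ℝ :=
  max 0 (min (xb x (i, j)) (x (Sum.inr (Sum.inr (j, 1))) - preJ E x j i))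

/-- the canonical coherent weight of a route in the decomposition of `x`. -/
def lam (E : Finset (ℕ × ℕ)) (x : GEdge → ℝ) (r : Route) : ℝ :=
  if r.2.1 ∈ E then
    (if r.1 = 1 then
      (if r.2.2 = 1 then min (Aval E x r.2.1.1 r.2.1.2) (Bval E x r.2.1.1 r.2.1.2)
       else if r.2.2 = 2 then
         Aval E x r.2.1.1 r.2.1.2 - min (Aval E x r.2.1.1 r.2.1.2) (Bval E x r.2.1.1 r.2.1.2)
       else 0)
     else if r.1 = 2 then
      (if r.2.2 = 1 then
         Bval E x r.2.1.1 r.2.1.2 - min (Aval E x r.2.1.1 r.2.1.2) (Bval E x r.2.1.1 r.2.1.2)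
       else if r.2.2 = 2 then
         xb x r.2.1 - max (Aval E x r.2.1.1 r.2.1.2) (Bval E x r.2.1.1 r.2.1.2)
       else 0)
     else 0)
  else 0

/-- the mixture of route vectors with weights `w`. -/
def mix (E : Finset (ℕ × ℕ)) (w : Route → ℝ) : GEdge → ℝ :=
  ∑ r ∈ RFin E, w r • routeVec r

lemma routeVec_inl (r : Route) (q : ℕ × ℕ) :
    routeVec r (Sum.inl q) = if q = (r.1, r.2.1.1) then 1 else 0 := by
  simp [routeVec]

lemma routeVec_beta (r : Route) (p : ℕ × ℕ) :
    routeVec r (Sum.inr (Sum.inl p)) = if p = r.2.1 then 1 else 0 := by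
  simp [routeVec]

lemma routeVec_gamma (r : Route) (q : ℕ × ℕ) :
    routeVec r (Sum.inr (Sum.inr q)) = if q = (r.2.1.2, r.2.2) then 1 else 0 := by
  simp [routeVec]


lemma routeVec_injective : Function.Injective routeVec := by
  intro r r' h
  have h1 := congrFun h (Sum.inl (r.1, r.2.1.1))
  have h2 := congrFun h (Sum.inr (Sum.inl r.2.1))
  have h3 := congrFun h (Sum.inr (Sum.inr (r.2.1.2, r.2.2)))
  rw [routeVec_inl, routeVec_inl, if_pos rfl] at h1
  rw [routeVec_beta, routeVec_beta, if_pos rfl] at h2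
  rw [routeVec_gamma, routeVec_gamma, if_pos rfl] at h3
  split_ifs at h1 with e1
  · split_ifs at h2 with e2
    · split_ifs at h3 with e3
      · obtain ⟨a1, -⟩ := Prod.mk.inj e1
        obtain ⟨-, c1⟩ := Prod.mk.inj e3
        exact Prod.ext a1 (Prod.ext e2 c1)
      · norm_num at h3
    · norm_num at h2
  · norm_num at h1

lemma sum12 {f : ℕ → ℝ} : ∑ a ∈ ({1, 2} : Finset ℕ), f a = f 1 + f 2 := by
  rw [show ({1, 2} : Finset ℕ) = insert 1 {2} from rfl, Finset.sum_insert (by decide),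
    Finset.sum_singleton]

lemma mix_eval (E : Finset (ℕ × ℕ)) (w : Route → ℝ) (e : GEdge) :
    mix E w e = ∑ a ∈ ({1, 2} : Finset ℕ), ∑ p ∈ E, ∑ c ∈ ({1, 2} : Finset ℕ),
      w (a, p, c) * routeVec (a, p, c) e := by
  rw [mix, Finset.sum_apply, RFin, Finset.sum_product]
  apply Finset.sum_congr rfl
  intro a _
  rw [Finset.sum_product]
  rfl

lemma mix_beta (E : Finset (ℕ × ℕ)) (w : Route → ℝ) {p : ℕ × ℕ} (hp : p ∈ E) :
    mix E w (Sum.inr (Sum.inl p)) =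
      (w (1, p, 1) + w (1, p, 2)) + (w (2, p, 1) + w (2, p, 2)) := by
  rw [mix_eval, sum12]
  have h1 : ∀ a : ℕ, ∑ q ∈ E, ∑ c ∈ ({1, 2} : Finset ℕ),
      w (a, q, c) * routeVec (a, q, c) (Sum.inr (Sum.inl p)) = w (a, p, 1) + w (a, p, 2) := by
    intro a
    rw [Finset.sum_eq_single_of_mem p hp]
    · rw [sum12]
      simp [routeVec_beta]
    · intro q hq hne
      apply Finset.sum_eq_zero
      intro c _
      rw [routeVec_beta]
      simp [Ne.symm hne]
  rw [h1 1, h1 2]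

lemma mix_beta_not (E : Finset (ℕ × ℕ)) (w : Route → ℝ) {p : ℕ × ℕ} (hp : p ∉ E) :
    mix E w (Sum.inr (Sum.inl p)) = 0 := by
  rw [mix_eval]
  apply Finset.sum_eq_zero; intro a _
  apply Finset.sum_eq_zero; intro q hq
  apply Finset.sum_eq_zero; intro c _
  rw [routeVec_beta]
  have : p ≠ q := fun h => hp (h ▸ hq)
  simp [this]

lemma mix_alpha (E : Finset (ℕ × ℕ)) (w : Route → ℝ) {a0 : ℕ} (i : ℕ) (ha : a0 = 1 ∨ a0 = 2) :
    mix E w (Sum.inl (a0, i)) = ∑ j ∈ Nbr E i, (w (a0, (i, j), 1) + w (a0, (i, j), 2)) := by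
  rw [mix_eval]
  have key : ∀ a : ℕ, ∑ q ∈ E, ∑ c ∈ ({1, 2} : Finset ℕ),
      w (a, q, c) * routeVec (a, q, c) (Sum.inl (a0, i))
      = if a = a0 then ∑ j ∈ Nbr E i, (w (a, (i, j), 1) + w (a, (i, j), 2)) else 0 := by
    intro a
    by_cases haa : a = a0
    · rw [if_pos haa, sum_Nbr E i (fun p => w (a, p, 1) + w (a, p, 2)), Finset.sum_filter]
      apply Finset.sum_congr rfl
      intro q _
      by_cases hq : q.1 = i
      · rw [if_pos hq, sum12]
        have e : (a0, i) = ((a, q, (1:ℕ)).1, (a, q, (1:ℕ)).2.1.1) :=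
          Prod.ext haa.symm hq.symm
        simp [routeVec_inl, e]
      · rw [if_neg hq]
        apply Finset.sum_eq_zero
        intro c _
        rw [routeVec_inl]
        have hne : (a0, i) ≠ ((a, q, c).1, (a, q, c).2.1.1) := by
          intro h
          exact hq (Prod.mk.inj h).2.symm
        rw [if_neg hne, mul_zero]
    · rw [if_neg haa]
      apply Finset.sum_eq_zero; intro q _
      apply Finset.sum_eq_zero; intro c _
      rw [routeVec_inl]
      have hne : (a0, i) ≠ ((a, q, c).1, (a, q, c).2.1.1) := by
        intro h
        exact haa (Prod.mk.inj h).1.symm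
      rw [if_neg hne, mul_zero]
  rw [Finset.sum_congr rfl (fun a _ => key a), sum12]
  rcases ha with rfl | rfl
  · simp
  · simp

lemma mix_alpha_not (E : Finset (ℕ × ℕ)) (w : Route → ℝ) {a0 : ℕ} (i : ℕ)
    (ha : ¬(a0 = 1 ∨ a0 = 2)) : mix E w (Sum.inl (a0, i)) = 0 := by
  rw [mix_eval]
  apply Finset.sum_eq_zero; intro a haa
  apply Finset.sum_eq_zero; intro q _
  apply Finset.sum_eq_zero; intro c _
  rw [routeVec_inl]
  simp only [Finset.mem_insert, Finset.mem_singleton] at haa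
  have hne : (a0, i) ≠ ((a, q, c).1, (a, q, c).2.1.1) := by
    intro h
    exact ha ((Prod.mk.inj h).1 ▸ haa)
  rw [if_neg hne, mul_zero]

lemma mix_gamma (E : Finset (ℕ × ℕ)) (w : Route → ℝ) {c0 : ℕ} (j : ℕ) (hc : c0 = 1 ∨ c0 = 2) :
    mix E w (Sum.inr (Sum.inr (j, c0))) =
      ∑ i ∈ Nbr' E j, (w (1, (i, j), c0) + w (2, (i, j), c0)) := by
  rw [mix_eval]
  have key : ∀ a : ℕ, ∑ q ∈ E, ∑ c ∈ ({1, 2} : Finset ℕ),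
      w (a, q, c) * routeVec (a, q, c) (Sum.inr (Sum.inr (j, c0)))
      = ∑ i ∈ Nbr' E j, w (a, (i, j), c0) := by
    intro a
    rw [sum_Nbr' E j (fun p => w (a, p, c0)), Finset.sum_filter]
    apply Finset.sum_congr rfl
    intro q _
    by_cases hq : q.2 = j
    · rw [if_pos hq, sum12]
      rcases hc with rfl | rfl
      · simp [routeVec_gamma, hq]
      · simp [routeVec_gamma, hq]
    · rw [if_neg hq]
      apply Finset.sum_eq_zero
      intro c _
      rw [routeVec_gamma]
      have hne : (j, c0) ≠ ((a, q, c).2.1.2, (a, q, c).2.2) := by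
        intro h
        exact hq (Prod.mk.inj h).1.symm
      rw [if_neg hne, mul_zero]
  rw [Finset.sum_congr rfl (fun a _ => key a), sum12, ← Finset.sum_add_distrib]

lemma mix_gamma_not (E : Finset (ℕ × ℕ)) (w : Route → ℝ) {c0 : ℕ} (j : ℕ)
    (hc : ¬(c0 = 1 ∨ c0 = 2)) : mix E w (Sum.inr (Sum.inr (j, c0))) = 0 := by
  rw [mix_eval]
  apply Finset.sum_eq_zero; intro a _
  apply Finset.sum_eq_zero; intro q _
  apply Finset.sum_eq_zero; intro c hcc
  rw [routeVec_gamma]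
  simp only [Finset.mem_insert, Finset.mem_singleton] at hcc
  have hne : (j, c0) ≠ ((a, q, c).2.1.2, (a, q, c).2.2) := by
    intro h
    exact hc ((Prod.mk.inj h).2 ▸ hcc)
  rw [if_neg hne, mul_zero]

-- ==== chunk 3 ====
section Lam

variable (E : Finset (ℕ × ℕ)) (x : GEdge → ℝ)

lemma Aval_nonneg (i j : ℕ) : 0 ≤ Aval E x i j := le_max_left _ _

lemma Bval_nonneg (i j : ℕ) : 0 ≤ Bval E x i j := le_max_left _ _

lemma Aval_le {i j : ℕ} (hb : 0 ≤ xb x (i, j)) : Aval E x i j ≤ xb x (i, j) :=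
  max_le hb (min_le_left _ _)

lemma Bval_le {i j : ℕ} (hb : 0 ≤ xb x (i, j)) : Bval E x i j ≤ xb x (i, j) :=
  max_le hb (min_le_left _ _)

lemma lam_11 {p : ℕ × ℕ} (hp : p ∈ E) :
    lam E x (1, p, 1) = min (Aval E x p.1 p.2) (Bval E x p.1 p.2) := by
  simp [lam, hp]

lemma lam_12 {p : ℕ × ℕ} (hp : p ∈ E) :
    lam E x (1, p, 2) = Aval E x p.1 p.2 - min (Aval E x p.1 p.2) (Bval E x p.1 p.2) := by
  simp [lam, hp]

lemma lam_21 {p : ℕ × ℕ} (hp : p ∈ E) :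
    lam E x (2, p, 1) = Bval E x p.1 p.2 - min (Aval E x p.1 p.2) (Bval E x p.1 p.2) := by
  simp [lam, hp]

lemma lam_22 {p : ℕ × ℕ} (hp : p ∈ E) :
    lam E x (2, p, 2) = xb x p - max (Aval E x p.1 p.2) (Bval E x p.1 p.2) := by
  simp [lam, hp]

lemma lam_not_route {r : Route} (h : ¬ IsRoute E r) : lam E x r = 0 := by
  unfold lam
  split_ifs with h1 h2 h3 h4 h5 h6 h7 <;> simp_all [IsRoute]

lemma lam_support {r : Route} (h : lam E x r ≠ 0) : IsRoute E r := by
  by_contra hc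
  exact h (lam_not_route E x hc)

lemma lam_nonneg {n m : ℕ} (hx : x ∈ FlowPolytope n m E) (r : Route) : 0 ≤ lam E x r := by
  unfold lam
  split_ifs with h1 h2 h3 h4 h5 h6 h7
  · exact le_min (Aval_nonneg E x _ _) (Bval_nonneg E x _ _)
  · exact sub_nonneg.mpr (min_le_left _ _)
  · exact le_refl 0
  · exact sub_nonneg.mpr (min_le_right _ _)
  · have hb : 0 ≤ xb x r.2.1 := hx.1 (Sum.inr (Sum.inl r.2.1)) h1
    refine sub_nonneg.mpr (max_le ?_ ?_)
    · calc Aval E x r.2.1.1 r.2.1.2 ≤ xb x (r.2.1.1, r.2.1.2) := Aval_le E x (by rwa [Prod.mk.eta])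
        _ = xb x r.2.1 := by rw [Prod.mk.eta]
    · calc Bval E x r.2.1.1 r.2.1.2 ≤ xb x (r.2.1.1, r.2.1.2) := Bval_le E x (by rwa [Prod.mk.eta])
        _ = xb x r.2.1 := by rw [Prod.mk.eta]
  · exact le_refl 0
  · exact le_refl 0
  · exact le_refl 0

variable {E x}

lemma L_a1 {p : ℕ × ℕ} {c : ℕ} (hp : p ∈ E) (hc : c = 1 ∨ c = 2)
    (h : 0 < lam E x (1, p, c)) : 0 < Aval E x p.1 p.2 := by
  rcases hc with rfl | rfl
  · rw [lam_11 E x hp] at h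
    exact lt_of_lt_of_le h (min_le_left _ _)
  · rw [lam_12 E x hp] at h
    rcases min_lt_iff.mp (by linarith : min (Aval E x p.1 p.2) (Bval E x p.1 p.2) < Aval E x p.1 p.2)
      with h2 | h2
    · exact absurd h2 (lt_irrefl _)
    · exact lt_of_le_of_lt (Bval_nonneg E x _ _) h2

lemma L_a2 {p : ℕ × ℕ} {c : ℕ} (hp : p ∈ E) (hc : c = 1 ∨ c = 2) (hb : 0 ≤ xb x p)
    (h : 0 < lam E x (2, p, c)) : Aval E x p.1 p.2 < xb x p := by
  have hb' : 0 ≤ xb x (p.1, p.2) := by rwa [Prod.mk.eta]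
  rcases hc with rfl | rfl
  · rw [lam_21 E x hp] at h
    have h2 : Aval E x p.1 p.2 < Bval E x p.1 p.2 := by
      rcases min_lt_iff.mp (by linarith : min (Aval E x p.1 p.2) (Bval E x p.1 p.2) < Bval E x p.1 p.2)
        with h2 | h2
      · exact h2
      · exact absurd h2 (lt_irrefl _)
    calc Aval E x p.1 p.2 < Bval E x p.1 p.2 := h2
      _ ≤ xb x (p.1, p.2) := Bval_le E x hb'
      _ = xb x p := by rw [Prod.mk.eta]
  · rw [lam_22 E x hp] at h
    calc Aval E x p.1 p.2 ≤ max (Aval E x p.1 p.2) (Bval E x p.1 p.2) := le_max_left _ _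
      _ < xb x p := by linarith

lemma L_c1 {p : ℕ × ℕ} {a : ℕ} (hp : p ∈ E) (ha : a = 1 ∨ a = 2)
    (h : 0 < lam E x (a, p, 1)) : 0 < Bval E x p.1 p.2 := by
  rcases ha with rfl | rfl
  · rw [lam_11 E x hp] at h
    exact lt_of_lt_of_le h (min_le_right _ _)
  · rw [lam_21 E x hp] at h
    rcases min_lt_iff.mp (by linarith : min (Aval E x p.1 p.2) (Bval E x p.1 p.2) < Bval E x p.1 p.2)
      with h2 | h2
    · exact lt_of_le_of_lt (Aval_nonneg E x _ _) h2
    · exact absurd h2 (lt_irrefl _)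

lemma L_c2 {p : ℕ × ℕ} {a : ℕ} (hp : p ∈ E) (ha : a = 1 ∨ a = 2) (hb : 0 ≤ xb x p)
    (h : 0 < lam E x (a, p, 2)) : Bval E x p.1 p.2 < xb x p := by
  have hb' : 0 ≤ xb x (p.1, p.2) := by rwa [Prod.mk.eta]
  rcases ha with rfl | rfl
  · rw [lam_12 E x hp] at h
    have h2 : Bval E x p.1 p.2 < Aval E x p.1 p.2 := by
      rcases min_lt_iff.mp (by linarith : min (Aval E x p.1 p.2) (Bval E x p.1 p.2) < Aval E x p.1 p.2)
        with h2 | h2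
      · exact absurd h2 (lt_irrefl _)
      · exact h2
    calc Bval E x p.1 p.2 < Aval E x p.1 p.2 := h2
      _ ≤ xb x (p.1, p.2) := Aval_le E x hb'
      _ = xb x p := by rw [Prod.mk.eta]
  · rw [lam_22 E x hp] at h
    calc Bval E x p.1 p.2 ≤ max (Aval E x p.1 p.2) (Bval E x p.1 p.2) := le_max_right _ _
      _ < xb x p := by linarith

lemma L_12 {p : ℕ × ℕ} (hp : p ∈ E) (h : 0 < lam E x (1, p, 2)) :
    Bval E x p.1 p.2 < Aval E x p.1 p.2 := by
  rw [lam_12 E x hp] at h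
  rcases min_lt_iff.mp (by linarith : min (Aval E x p.1 p.2) (Bval E x p.1 p.2) < Aval E x p.1 p.2)
    with h2 | h2
  · exact absurd h2 (lt_irrefl _)
  · exact h2

lemma L_21 {p : ℕ × ℕ} (hp : p ∈ E) (h : 0 < lam E x (2, p, 1)) :
    Aval E x p.1 p.2 < Bval E x p.1 p.2 := by
  rw [lam_21 E x hp] at h
  rcases min_lt_iff.mp (by linarith : min (Aval E x p.1 p.2) (Bval E x p.1 p.2) < Bval E x p.1 p.2)
    with h2 | h2
  · exact h2
  · exact absurd h2 (lt_irrefl _)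

lemma Aval_lt_imp {i j : ℕ} (hb : 0 ≤ xb x (i, j)) (h : Aval E x i j < xb x (i, j)) :
    x (Sum.inl (1, i)) < preI E x i j + xb x (i, j) := by
  by_contra hc
  push_neg at hc
  have : min (xb x (i, j)) (x (Sum.inl (1, i)) - preI E x i j) = xb x (i, j) :=
    min_eq_left (by linarith)
  rw [Aval, this, max_eq_right hb] at h
  exact lt_irrefl _ h

lemma Aval_pos_imp {i j : ℕ} (h : 0 < Aval E x i j) :
    preI E x i j < x (Sum.inl (1, i)) := by
  by_contra hc
  push_neg at hc
  have : min (xb x (i, j)) (x (Sum.inl (1, i)) - preI E x i j) ≤ 0 :=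
    le_trans (min_le_right _ _) (by linarith)
  rw [Aval, max_eq_left this] at h
  exact lt_irrefl _ h

lemma Bval_lt_imp {i j : ℕ} (hb : 0 ≤ xb x (i, j)) (h : Bval E x i j < xb x (i, j)) :
    x (Sum.inr (Sum.inr (j, 1))) < preJ E x j i + xb x (i, j) := by
  by_contra hc
  push_neg at hc
  have : min (xb x (i, j)) (x (Sum.inr (Sum.inr (j, 1))) - preJ E x j i) = xb x (i, j) :=
    min_eq_left (by linarith)
  rw [Bval, this, max_eq_right hb] at h
  exact lt_irrefl _ h

lemma Bval_pos_imp {i j : ℕ} (h : 0 < Bval E x i j) :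
    preJ E x j i < x (Sum.inr (Sum.inr (j, 1))) := by
  by_contra hc
  push_neg at hc
  have : min (xb x (i, j)) (x (Sum.inr (Sum.inr (j, 1))) - preJ E x j i) ≤ 0 :=
    le_trans (min_le_right _ _) (by linarith)
  rw [Bval, max_eq_left this] at h
  exact lt_irrefl _ h

lemma preI_mono {n m : ℕ} (hx : x ∈ FlowPolytope n m E) {i j j' : ℕ} (hj : (i, j) ∈ E)
    (hlt : j < j') : preI E x i j + xb x (i, j) ≤ preI E x i j' := by
  have hsub : insert j ((Nbr E i).filter (· < j)) ⊆ (Nbr E i).filter (· < j') := by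
    intro y hy
    rcases Finset.mem_insert.mp hy with rfl | hy2
    · exact Finset.mem_filter.mpr ⟨mem_Nbr.mpr hj, hlt⟩
    · rcases Finset.mem_filter.mp hy2 with ⟨h1, h2⟩
      exact Finset.mem_filter.mpr ⟨h1, h2.trans hlt⟩
  have hj0 : j ∉ (Nbr E i).filter (· < j) := by simp
  calc preI E x i j + xb x (i, j) = ∑ y ∈ insert j ((Nbr E i).filter (· < j)), xb x (i, y) := by
        rw [Finset.sum_insert hj0, preI]; ring
    _ ≤ preI E x i j' := by
        apply Finset.sum_le_sum_of_subset_of_nonneg hsub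
        intro y hy _
        exact hx.1 _ (mem_Nbr.mp (Finset.mem_of_mem_filter y hy))

lemma preJ_mono {n m : ℕ} (hx : x ∈ FlowPolytope n m E) {j i i' : ℕ} (hi : (i, j) ∈ E)
    (hlt : i < i') : preJ E x j i + xb x (i, j) ≤ preJ E x j i' := by
  have hsub : insert i ((Nbr' E j).filter (· < i)) ⊆ (Nbr' E j).filter (· < i') := by
    intro y hy
    rcases Finset.mem_insert.mp hy with rfl | hy2
    · exact Finset.mem_filter.mpr ⟨mem_Nbr'.mpr hi, hlt⟩
    · rcases Finset.mem_filter.mp hy2 with ⟨h1, h2⟩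
      exact Finset.mem_filter.mpr ⟨h1, h2.trans hlt⟩
  have hi0 : i ∉ (Nbr' E j).filter (· < i) := by simp
  calc preJ E x j i + xb x (i, j) = ∑ y ∈ insert i ((Nbr' E j).filter (· < i)), xb x (y, j) := by
        rw [Finset.sum_insert hi0, preJ]; ring
    _ ≤ preJ E x j i' := by
        apply Finset.sum_le_sum_of_subset_of_nonneg hsub
        intro y hy _
        exact hx.1 _ (mem_Nbr'.mp (Finset.mem_of_mem_filter y hy))

end Lam

-- ==== chunk 4 ====
section Exist

variable {E : Finset (ℕ × ℕ)} {x : GEdge → ℝ} {n m : ℕ}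

lemma isGEdge_alpha {q : ℕ × ℕ} :
    IsGEdge n m E (Sum.inl q) ↔ (q.1 = 1 ∨ q.1 = 2) ∧ q.2 ∈ Finset.Icc 1 n := Iff.rfl

lemma isGEdge_beta {p : ℕ × ℕ} : IsGEdge n m E (Sum.inr (Sum.inl p)) ↔ p ∈ E := Iff.rfl

lemma isGEdge_gamma {q : ℕ × ℕ} :
    IsGEdge n m E (Sum.inr (Sum.inr q)) ↔ q.1 ∈ Finset.Icc 1 m ∧ (q.2 = 1 ∨ q.2 = 2) := Iff.rfl

lemma lam_11' (i j : ℕ) (hp : (i, j) ∈ E) :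
    lam E x (1, (i, j), 1) = min (Aval E x i j) (Bval E x i j) := by simp [lam, hp]

lemma lam_12' (i j : ℕ) (hp : (i, j) ∈ E) :
    lam E x (1, (i, j), 2) = Aval E x i j - min (Aval E x i j) (Bval E x i j) := by
  simp [lam, hp]

lemma lam_21' (i j : ℕ) (hp : (i, j) ∈ E) :
    lam E x (2, (i, j), 1) = Bval E x i j - min (Aval E x i j) (Bval E x i j) := by
  simp [lam, hp]

lemma lam_22' (i j : ℕ) (hp : (i, j) ∈ E) :
    lam E x (2, (i, j), 2) = xb x (i, j) - max (Aval E x i j) (Bval E x i j) := by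
  simp [lam, hp]

lemma exist_clique (hx : x ∈ FlowPolytope n m E) : IsClique E {r | lam E x r ≠ 0} := by
  constructor
  · intro r hr
    exact lam_support E x hr
  · rintro ⟨a, p, c⟩ hr ⟨a', p', c'⟩ hr' hne hconf
    simp only [Set.mem_setOf_eq] at hr hr'
    have h1 : 0 < lam E x (a, p, c) := lt_of_le_of_ne (lam_nonneg E x hx _) (Ne.symm hr)
    have h1' : 0 < lam E x (a', p', c') := lt_of_le_of_ne (lam_nonneg E x hx _) (Ne.symm hr')
    obtain ⟨ha, hp, hc⟩ := lam_support E x hr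
    obtain ⟨ha', hp', hc'⟩ := lam_support E x hr'
    have hp2 : p ∈ E := hp
    have hp2' : p' ∈ E := hp'
    have hb : 0 ≤ xb x p := hx.1 (Sum.inr (Sum.inl p)) hp2
    have hb' : 0 ≤ xb x p' := hx.1 (Sum.inr (Sum.inl p')) hp2'
    rcases hconf with ⟨heq, hcase⟩ | ⟨hii, hjj, hcase⟩ | ⟨hjj, hii, hcase⟩
    · have hpp : p = p' := heq
      subst hpp
      rcases hcase with ⟨ea, ec, ea', ec'⟩ | ⟨ea, ec, ea', ec'⟩
      · have e1 : a = 1 := ea; have e2 : c = 2 := ec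
        have e3 : a' = 2 := ea'; have e4 : c' = 1 := ec'
        subst e1; subst e2; subst e3; subst e4
        have g1 := L_12 hp2 h1
        have g2 := L_21 hp2 h1'
        linarith
      · have e1 : a = 2 := ea; have e2 : c = 1 := ec
        have e3 : a' = 1 := ea'; have e4 : c' = 2 := ec'
        subst e1; subst e2; subst e3; subst e4
        have g1 := L_21 hp2 h1
        have g2 := L_12 hp2 h1'
        linarith
    · have hii2 : p.1 = p'.1 := hii
      rcases hcase with ⟨hlt, ea', ea⟩ | ⟨hlt, ea, ea'⟩
      · have e1 : a = 2 := ea; have e2 : a' = 1 := ea'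
        subst e1; subst e2
        have g1 : Aval E x p.1 p.2 < xb x p := L_a2 hp2 hc hb h1
        have g2 : 0 < Aval E x p'.1 p'.2 := L_a1 hp2' hc' h1'
        rw [← hii2] at g2
        have g3 : x (Sum.inl (1, p.1)) < preI E x p.1 p.2 + xb x (p.1, p.2) :=
          Aval_lt_imp (by rwa [Prod.mk.eta]) (by rwa [Prod.mk.eta])
        have g4 := Aval_pos_imp g2
        have g5 := preI_mono hx (show (p.1, p.2) ∈ E by rwa [Prod.mk.eta]) (show p.2 < p'.2 from hlt)
        linarith
      · have e1 : a = 1 := ea; have e2 : a' = 2 := ea'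
        subst e1; subst e2
        have g1 : Aval E x p'.1 p'.2 < xb x p' := L_a2 hp2' hc' hb' h1'
        have g2 : 0 < Aval E x p.1 p.2 := L_a1 hp2 hc h1
        rw [hii2] at g2
        have g3' : x (Sum.inl (1, p'.1)) < preI E x p'.1 p'.2 + xb x (p'.1, p'.2) :=
          Aval_lt_imp (by rwa [Prod.mk.eta]) (by rwa [Prod.mk.eta])
        have g4 := Aval_pos_imp g2
        have g5 := preI_mono hx (show (p'.1, p'.2) ∈ E by rwa [Prod.mk.eta])
          (show p'.2 < p.2 from hlt)
        linarith
    · have hjj2 : p.2 = p'.2 := hjj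
      rcases hcase with ⟨hlt, ec, ec'⟩ | ⟨hlt, ec', ec⟩
      · have e1 : c = 2 := ec; have e2 : c' = 1 := ec'
        subst e1; subst e2
        have g1 : Bval E x p.1 p.2 < xb x p := L_c2 hp2 ha hb h1
        have g2 : 0 < Bval E x p'.1 p'.2 := L_c1 hp2' ha' h1'
        rw [← hjj2] at g2
        have g3 : x (Sum.inr (Sum.inr (p.2, 1))) < preJ E x p.2 p.1 + xb x (p.1, p.2) :=
          Bval_lt_imp (by rwa [Prod.mk.eta]) (by rwa [Prod.mk.eta])
        have g4 := Bval_pos_imp g2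
        have g5 := preJ_mono hx (show (p.1, p.2) ∈ E by rwa [Prod.mk.eta])
          (show p.1 < p'.1 from hlt)
        linarith
      · have e1 : c = 1 := ec; have e2 : c' = 2 := ec'
        subst e1; subst e2
        have g1 : Bval E x p'.1 p'.2 < xb x p' := L_c2 hp2' ha' hb' h1'
        have g2 : 0 < Bval E x p.1 p.2 := L_c1 hp2 ha h1
        rw [hjj2] at g2
        have g3 : x (Sum.inr (Sum.inr (p'.2, 1))) < preJ E x p'.2 p'.1 + xb x (p'.1, p'.2) :=
          Bval_lt_imp (by rwa [Prod.mk.eta]) (by rwa [Prod.mk.eta])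
        have g4 := Bval_pos_imp g2
        have g5 := preJ_mono hx (show (p'.1, p'.2) ∈ E by rwa [Prod.mk.eta])
          (show p'.1 < p.1 from hlt)
        linarith

lemma Nbr_empty (hE : ∀ p ∈ E, 1 ≤ p.1 ∧ p.1 ≤ n ∧ 1 ≤ p.2 ∧ p.2 ≤ m) {i : ℕ}
    (hi : i ∉ Finset.Icc 1 n) : Nbr E i = ∅ := by
  rw [Finset.eq_empty_iff_forall_notMem]
  intro j hj
  have h := hE _ (mem_Nbr.mp hj)
  exact hi (Finset.mem_Icc.mpr ⟨h.1, h.2.1⟩)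

lemma Nbr'_empty (hE : ∀ p ∈ E, 1 ≤ p.1 ∧ p.1 ≤ n ∧ 1 ≤ p.2 ∧ p.2 ≤ m) {j : ℕ}
    (hj : j ∉ Finset.Icc 1 m) : Nbr' E j = ∅ := by
  rw [Finset.eq_empty_iff_forall_notMem]
  intro i hi
  have h := hE _ (mem_Nbr'.mp hi)
  exact hj (Finset.mem_Icc.mpr ⟨h.2.2.1, h.2.2.2⟩)

lemma sum_Aval (hx : x ∈ FlowPolytope n m E) {i : ℕ} (hi : i ∈ Finset.Icc 1 n) :
    ∑ j ∈ Nbr E i, Aval E x i j = x (Sum.inl (1, i)) := by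
  unfold Aval preI
  rw [sum_clamp (Nbr E i) (fun j' => xb x (i, j')) (x (Sum.inl (1, i)))
    (hx.1 _ (show IsGEdge n m E (Sum.inl (1, i)) from ⟨Or.inl rfl, hi⟩))
    (fun j hj => hx.1 _ (show IsGEdge n m E (Sum.inr (Sum.inl (i, j))) from mem_Nbr.mp hj))]
  have hcons : x (Sum.inl (1, i)) + x (Sum.inl (2, i)) = ∑ j ∈ Nbr E i, xb x (i, j) :=
    hx.2.2.1 i hi
  have h2 : 0 ≤ x (Sum.inl (2, i)) :=
    hx.1 _ (show IsGEdge n m E (Sum.inl (2, i)) from ⟨Or.inr rfl, hi⟩)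
  exact min_eq_left (by linarith)

lemma sum_Bval (hx : x ∈ FlowPolytope n m E) {j : ℕ} (hj : j ∈ Finset.Icc 1 m) :
    ∑ i ∈ Nbr' E j, Bval E x i j = x (Sum.inr (Sum.inr (j, 1))) := by
  unfold Bval preJ
  rw [sum_clamp (Nbr' E j) (fun i' => xb x (i', j)) (x (Sum.inr (Sum.inr (j, 1))))
    (hx.1 _ (show IsGEdge n m E (Sum.inr (Sum.inr (j, 1))) from ⟨hj, Or.inl rfl⟩))
    (fun i hi => hx.1 _ (show IsGEdge n m E (Sum.inr (Sum.inl (i, j))) from mem_Nbr'.mp hi))]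
  have hcons : ∑ i ∈ Nbr' E j, xb x (i, j)
      = x (Sum.inr (Sum.inr (j, 1))) + x (Sum.inr (Sum.inr (j, 2))) := hx.2.2.2.1 j hj
  have h2 : 0 ≤ x (Sum.inr (Sum.inr (j, 2))) :=
    hx.1 _ (show IsGEdge n m E (Sum.inr (Sum.inr (j, 2))) from ⟨hj, Or.inr rfl⟩)
  exact min_eq_left (by linarith)

lemma exist_decomp (hE : ∀ p ∈ E, 1 ≤ p.1 ∧ p.1 ≤ n ∧ 1 ≤ p.2 ∧ p.2 ≤ m)
    (hx : x ∈ FlowPolytope n m E) : mix E (lam E x) = x := by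
  funext e
  match e with
  | Sum.inl (a0, i) =>
    by_cases ha : a0 = 1 ∨ a0 = 2
    · by_cases hi : i ∈ Finset.Icc 1 n
      · rw [mix_alpha E (lam E x) i ha]
        have hcons : x (Sum.inl (1, i)) + x (Sum.inl (2, i)) = ∑ j ∈ Nbr E i, xb x (i, j) :=
          hx.2.2.1 i hi
        rcases ha with rfl | rfl
        · have hterm : ∀ j ∈ Nbr E i,
              lam E x (1, (i, j), 1) + lam E x (1, (i, j), 2) = Aval E x i j := by
            intro j hj
            rw [lam_11' i j (mem_Nbr.mp hj), lam_12' i j (mem_Nbr.mp hj)]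
            ring
          rw [Finset.sum_congr rfl hterm, sum_Aval hx hi]
        · have hterm : ∀ j ∈ Nbr E i,
              lam E x (2, (i, j), 1) + lam E x (2, (i, j), 2) = xb x (i, j) - Aval E x i j := by
            intro j hj
            rw [lam_21' i j (mem_Nbr.mp hj), lam_22' i j (mem_Nbr.mp hj)]
            have := min_add_max (Aval E x i j) (Bval E x i j)
            linarith
          rw [Finset.sum_congr rfl hterm, Finset.sum_sub_distrib, sum_Aval hx hi]
          linarith
      · rw [mix_alpha E (lam E x) i ha, Nbr_empty hE hi, Finset.sum_empty]
        exact (hx.2.1 (Sum.inl (a0, i)) (fun h => hi (isGEdge_alpha.mp h).2)).symm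
    · rw [mix_alpha_not E (lam E x) i ha]
      exact (hx.2.1 (Sum.inl (a0, i)) (fun h => ha (isGEdge_alpha.mp h).1)).symm
  | Sum.inr (Sum.inl p) =>
    by_cases hp : p ∈ E
    · rw [mix_beta E (lam E x) hp, lam_11 E x hp, lam_12 E x hp, lam_21 E x hp, lam_22 E x hp]
      have := min_add_max (Aval E x p.1 p.2) (Bval E x p.1 p.2)
      have hxb : x (Sum.inr (Sum.inl p)) = xb x p := rfl
      rw [hxb]
      linarith
    · rw [mix_beta_not E (lam E x) hp]
      exact (hx.2.1 (Sum.inr (Sum.inl p)) (fun h => hp (isGEdge_beta.mp h))).symm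
  | Sum.inr (Sum.inr (j, c0)) =>
    by_cases hc : c0 = 1 ∨ c0 = 2
    · by_cases hj : j ∈ Finset.Icc 1 m
      · rw [mix_gamma E (lam E x) j hc]
        have hcons : ∑ i ∈ Nbr' E j, xb x (i, j)
            = x (Sum.inr (Sum.inr (j, 1))) + x (Sum.inr (Sum.inr (j, 2))) := hx.2.2.2.1 j hj
        rcases hc with rfl | rfl
        · have hterm : ∀ i ∈ Nbr' E j,
              lam E x (1, (i, j), 1) + lam E x (2, (i, j), 1) = Bval E x i j := by
            intro i hi
            rw [lam_11' i j (mem_Nbr'.mp hi), lam_21' i j (mem_Nbr'.mp hi)]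
            ring
          rw [Finset.sum_congr rfl hterm, sum_Bval hx hj]
        · have hterm : ∀ i ∈ Nbr' E j,
              lam E x (1, (i, j), 2) + lam E x (2, (i, j), 2) = xb x (i, j) - Bval E x i j := by
            intro i hi
            rw [lam_12' i j (mem_Nbr'.mp hi), lam_22' i j (mem_Nbr'.mp hi)]
            have := min_add_max (Aval E x i j) (Bval E x i j)
            linarith
          rw [Finset.sum_congr rfl hterm, Finset.sum_sub_distrib, sum_Bval hx hj]
          linarith
      · rw [mix_gamma E (lam E x) j hc, Nbr'_empty hE hj, Finset.sum_empty]
        exact (hx.2.1 (Sum.inr (Sum.inr (j, c0))) (fun h => hj (isGEdge_gamma.mp h).1)).symm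
    · rw [mix_gamma_not E (lam E x) j hc]
      exact (hx.2.1 (Sum.inr (Sum.inr (j, c0))) (fun h => hc (isGEdge_gamma.mp h).2)).symm

lemma sum_four (E : Finset (ℕ × ℕ)) (w : Route → ℝ) :
    ∑ r ∈ RFin E, w r =
      ∑ p ∈ E, ((w (1, p, 1) + w (1, p, 2)) + (w (2, p, 1) + w (2, p, 2))) := by
  rw [RFin, Finset.sum_product, sum12]
  have h1 : ∀ a : ℕ, ∑ q ∈ E ×ˢ ({1, 2} : Finset ℕ), w (a, q)
      = ∑ p ∈ E, (w (a, p, 1) + w (a, p, 2)) := by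
    intro a
    rw [Finset.sum_product]
    apply Finset.sum_congr rfl
    intro p _
    rw [sum12]
  rw [h1 1, h1 2, ← Finset.sum_add_distrib]

lemma exist_sum (hE : ∀ p ∈ E, 1 ≤ p.1 ∧ p.1 ≤ n ∧ 1 ≤ p.2 ∧ p.2 ≤ m)
    (hx : x ∈ FlowPolytope n m E) : ∑ r ∈ RFin E, lam E x r = 1 := by
  rw [sum_four]
  have hterm : ∀ p ∈ E, ((lam E x (1, p, 1) + lam E x (1, p, 2))
      + (lam E x (2, p, 1) + lam E x (2, p, 2))) = xb x p := by
    intro p hp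
    rw [lam_11 E x hp, lam_12 E x hp, lam_21 E x hp, lam_22 E x hp]
    have := min_add_max (Aval E x p.1 p.2) (Bval E x p.1 p.2)
    linarith
  rw [Finset.sum_congr rfl hterm]
  have hfib : ∑ i ∈ Finset.Icc 1 n, ∑ p ∈ E.filter (fun p => p.1 = i), xb x p
      = ∑ p ∈ E, xb x p :=
    Finset.sum_fiberwise_of_maps_to
      (fun p hp => Finset.mem_Icc.mpr ⟨(hE p hp).1, (hE p hp).2.1⟩) _
  rw [← hfib]
  have hinner : ∀ i ∈ Finset.Icc 1 n, ∑ p ∈ E.filter (fun p => p.1 = i), xb x p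
      = x (Sum.inl (1, i)) + x (Sum.inl (2, i)) := by
    intro i hi
    rw [← sum_Nbr E i (fun p => xb x p)]
    exact (hx.2.2.1 i hi).symm
  rw [Finset.sum_congr rfl hinner]
  exact hx.2.2.2.2

end Exist

-- ==== chunk 5 ====
section Unique

variable {E : Finset (ℕ × ℕ)} {C : Set Route} {w : Route → ℝ}

lemma unique_A (hC : IsClique E C) (hw0 : ∀ r, 0 ≤ w r) (hsupp : ∀ r, w r ≠ 0 → r ∈ C)
    {p : ℕ × ℕ} (hp : p ∈ E) :
    w (1, p, 1) + w (1, p, 2) = Aval E (mix E w) p.1 p.2 := by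
  obtain ⟨i, j⟩ := p
  have hb : ∀ j' ∈ Nbr E i, xb (mix E w) (i, j')
      = (w (1, (i, j'), 1) + w (1, (i, j'), 2)) + (w (2, (i, j'), 1) + w (2, (i, j'), 2)) :=
    fun j' hj' => mix_beta E w (mem_Nbr.mp hj')
  have h0 : ∀ j' ∈ Nbr E i, 0 ≤ w (1, (i, j'), 1) + w (1, (i, j'), 2) :=
    fun j' _ => add_nonneg (hw0 _) (hw0 _)
  have h1 : ∀ j' ∈ Nbr E i, w (1, (i, j'), 1) + w (1, (i, j'), 2) ≤ xb (mix E w) (i, j') := by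
    intro j' hj'
    rw [hb j' hj']
    have := hw0 (2, (i, j'), 1)
    have := hw0 (2, (i, j'), 2)
    linarith
  have hcoh : ∀ j₁ ∈ Nbr E i, ∀ j₂ ∈ Nbr E i, j₁ < j₂ →
      w (1, (i, j₁), 1) + w (1, (i, j₁), 2) < xb (mix E w) (i, j₁) →
      w (1, (i, j₂), 1) + w (1, (i, j₂), 2) = 0 := by
    intro j₁ hj₁ j₂ hj₂ hlt hless
    rw [hb j₁ hj₁] at hless
    have hpos : 0 < w (2, (i, j₁), 1) + w (2, (i, j₁), 2) := by linarith
    have hex : ∃ c₁, (c₁ = 1 ∨ c₁ = 2) ∧ w (2, (i, j₁), c₁) ≠ 0 := by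
      by_cases h' : w (2, (i, j₁), 1) = 0
      · exact ⟨2, Or.inr rfl, by intro h''; rw [h', h''] at hpos; linarith⟩
      · exact ⟨1, Or.inl rfl, h'⟩
    obtain ⟨c₁, hc₁, hne₁⟩ := hex
    by_contra hne2
    have hpos2 : 0 < w (1, (i, j₂), 1) + w (1, (i, j₂), 2) :=
      lt_of_le_of_ne (h0 j₂ hj₂) (Ne.symm hne2)
    have hex2 : ∃ c₂, w (1, (i, j₂), c₂) ≠ 0 := by
      by_cases h' : w (1, (i, j₂), 1) = 0
      · exact ⟨2, by intro h''; rw [h', h''] at hpos2; linarith⟩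
      · exact ⟨1, h'⟩
    obtain ⟨c₂, hne₂⟩ := hex2
    have hr1 : (2, (i, j₁), c₁) ∈ C := hsupp _ hne₁
    have hr2 : (1, (i, j₂), c₂) ∈ C := hsupp _ hne₂
    have hneq : ((2 : ℕ), (i, j₁), c₁) ≠ (1, (i, j₂), c₂) := by
      intro h
      exact absurd (congrArg Prod.fst h) (by norm_num)
    apply hC.2 _ hr1 _ hr2 hneq
    exact Or.inr (Or.inl ⟨rfl, Nat.ne_of_lt hlt, Or.inl ⟨hlt, rfl, rfl⟩⟩)
  have halpha : ∑ j' ∈ Nbr E i, (w (1, (i, j'), 1) + w (1, (i, j'), 2))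
      = mix E w (Sum.inl (1, i)) := (mix_alpha E w i (Or.inl rfl)).symm
  have := threshold (Nbr E i) (fun j' => xb (mix E w) (i, j'))
    (fun j' => w (1, (i, j'), 1) + w (1, (i, j'), 2)) h0 h1 hcoh j (mem_Nbr.mpr hp)
  rw [halpha] at this
  exact this

lemma unique_B (hC : IsClique E C) (hw0 : ∀ r, 0 ≤ w r) (hsupp : ∀ r, w r ≠ 0 → r ∈ C)
    {p : ℕ × ℕ} (hp : p ∈ E) :
    w (1, p, 1) + w (2, p, 1) = Bval E (mix E w) p.1 p.2 := by
  obtain ⟨i, j⟩ := p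
  have hb : ∀ i' ∈ Nbr' E j, xb (mix E w) (i', j)
      = (w (1, (i', j), 1) + w (1, (i', j), 2)) + (w (2, (i', j), 1) + w (2, (i', j), 2)) :=
    fun i' hi' => mix_beta E w (mem_Nbr'.mp hi')
  have h0 : ∀ i' ∈ Nbr' E j, 0 ≤ w (1, (i', j), 1) + w (2, (i', j), 1) :=
    fun i' _ => add_nonneg (hw0 _) (hw0 _)
  have h1 : ∀ i' ∈ Nbr' E j, w (1, (i', j), 1) + w (2, (i', j), 1) ≤ xb (mix E w) (i', j) := by
    intro i' hi'
    rw [hb i' hi']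
    have := hw0 (1, (i', j), 2)
    have := hw0 (2, (i', j), 2)
    linarith
  have hcoh : ∀ i₁ ∈ Nbr' E j, ∀ i₂ ∈ Nbr' E j, i₁ < i₂ →
      w (1, (i₁, j), 1) + w (2, (i₁, j), 1) < xb (mix E w) (i₁, j) →
      w (1, (i₂, j), 1) + w (2, (i₂, j), 1) = 0 := by
    intro i₁ hi₁ i₂ hi₂ hlt hless
    rw [hb i₁ hi₁] at hless
    have hpos : 0 < w (1, (i₁, j), 2) + w (2, (i₁, j), 2) := by linarith
    have hex : ∃ a₁, w (a₁, (i₁, j), 2) ≠ 0 := by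
      by_cases h' : w (1, (i₁, j), 2) = 0
      · exact ⟨2, by intro h''; rw [h', h''] at hpos; linarith⟩
      · exact ⟨1, h'⟩
    obtain ⟨a₁, hne₁⟩ := hex
    by_contra hne2
    have hpos2 : 0 < w (1, (i₂, j), 1) + w (2, (i₂, j), 1) :=
      lt_of_le_of_ne (h0 i₂ hi₂) (Ne.symm hne2)
    have hex2 : ∃ a₂, w (a₂, (i₂, j), 1) ≠ 0 := by
      by_cases h' : w (1, (i₂, j), 1) = 0
      · exact ⟨2, by intro h''; rw [h', h''] at hpos2; linarith⟩
      · exact ⟨1, h'⟩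
    obtain ⟨a₂, hne₂⟩ := hex2
    have hr1 : (a₁, (i₁, j), 2) ∈ C := hsupp _ hne₁
    have hr2 : (a₂, (i₂, j), 1) ∈ C := hsupp _ hne₂
    have hneq : (a₁, (i₁, j), (2 : ℕ)) ≠ (a₂, (i₂, j), 1) := by
      intro h
      have := congrArg (fun r : Route => r.2.2) h
      norm_num at this
    apply hC.2 _ hr1 _ hr2 hneq
    exact Or.inr (Or.inr ⟨rfl, Nat.ne_of_lt hlt, Or.inl ⟨hlt, rfl, rfl⟩⟩)
  have hgamma : ∑ i' ∈ Nbr' E j, (w (1, (i', j), 1) + w (2, (i', j), 1))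
      = mix E w (Sum.inr (Sum.inr (j, 1))) := (mix_gamma E w j (Or.inl rfl)).symm
  have := threshold (Nbr' E j) (fun i' => xb (mix E w) (i', j))
    (fun i' => w (1, (i', j), 1) + w (2, (i', j), 1)) h0 h1 hcoh i (mem_Nbr'.mpr hp)
  rw [hgamma] at this
  exact this

theorem lam_unique (hC : IsClique E C) (hw0 : ∀ r, 0 ≤ w r) (hsupp : ∀ r, w r ≠ 0 → r ∈ C) :
    ∀ r ∈ RFin E, w r = lam E (mix E w) r := by
  rintro ⟨a, p, c⟩ hr
  obtain ⟨ha, hp, hc⟩ := mem_RFin.mp hr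
  have hp' : p ∈ E := hp
  have hA := unique_A hC hw0 hsupp hp'
  have hB := unique_B hC hw0 hsupp hp'
  have hb4 : (w (1, p, 1) + w (1, p, 2)) + (w (2, p, 1) + w (2, p, 2))
      = xb (mix E w) p := (mix_beta E w hp').symm
  have hqr : w (1, p, 2) = 0 ∨ w (2, p, 1) = 0 := by
    by_contra hcon
    push_neg at hcon
    have hr1 : ((1 : ℕ), p, (2 : ℕ)) ∈ C := hsupp _ hcon.1
    have hr2 : ((2 : ℕ), p, (1 : ℕ)) ∈ C := hsupp _ hcon.2
    have hneq : ((1 : ℕ), p, (2 : ℕ)) ≠ ((2 : ℕ), p, (1 : ℕ)) := by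
      intro h
      exact absurd (congrArg Prod.fst h) (by norm_num)
    exact hC.2 _ hr1 _ hr2 hneq (Or.inl ⟨rfl, Or.inl ⟨rfl, rfl, rfl, rfl⟩⟩)
  have w110 := hw0 (1, p, 1)
  have w120 := hw0 (1, p, 2)
  have w210 := hw0 (2, p, 1)
  have w220 := hw0 (2, p, 2)
  rcases hqr with hq | hq
  · -- w (1,p,2) = 0 : A ≤ B
    have hmin : min (Aval E (mix E w) p.1 p.2) (Bval E (mix E w) p.1 p.2)
        = Aval E (mix E w) p.1 p.2 := min_eq_left (by linarith)
    have hmax : max (Aval E (mix E w) p.1 p.2) (Bval E (mix E w) p.1 p.2)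
        = Bval E (mix E w) p.1 p.2 := max_eq_right (by linarith)
    rcases ha with rfl | rfl <;> rcases hc with rfl | rfl
    · rw [lam_11 E (mix E w) hp', hmin]; linarith
    · rw [lam_12 E (mix E w) hp', hmin]; linarith
    · rw [lam_21 E (mix E w) hp', hmin]; linarith
    · rw [lam_22 E (mix E w) hp', hmax]; linarith
  · -- w (2,p,1) = 0 : B ≤ A
    have hmin : min (Aval E (mix E w) p.1 p.2) (Bval E (mix E w) p.1 p.2)
        = Bval E (mix E w) p.1 p.2 := min_eq_right (by linarith)
    have hmax : max (Aval E (mix E w) p.1 p.2) (Bval E (mix E w) p.1 p.2)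
        = Aval E (mix E w) p.1 p.2 := max_eq_left (by linarith)
    rcases ha with rfl | rfl <;> rcases hc with rfl | rfl
    · rw [lam_11 E (mix E w) hp', hmin]; linarith
    · rw [lam_12 E (mix E w) hp', hmin]; linarith
    · rw [lam_21 E (mix E w) hp', hmin]; linarith
    · rw [lam_22 E (mix E w) hp', hmax]; linarith

end Unique

-- ==== chunk 6 ====
section Poly

variable {E : Finset (ℕ × ℕ)} {n m : ℕ}

lemma flow_convex : Convex ℝ (FlowPolytope n m E) := by
  intro x hx y hy a b ha hb hab
  obtain ⟨hx1, hx2, hx3, hx4, hx5⟩ := hx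
  obtain ⟨hy1, hy2, hy3, hy4, hy5⟩ := hy
  have heval : ∀ e : GEdge, (a • x + b • y) e = a * x e + b * y e := by
    intro e; simp [smul_eq_mul]
  refine ⟨?_, ?_, ?_, ?_, ?_⟩
  · intro e he
    rw [heval]
    exact add_nonneg (mul_nonneg ha (hx1 e he)) (mul_nonneg hb (hy1 e he))
  · intro e he
    rw [heval, hx2 e he, hy2 e he]
    ring
  · intro i hi
    have h1 := hx3 i hi
    have h2 := hy3 i hi
    simp only [heval]
    calc a * x (Sum.inl (1, i)) + b * y (Sum.inl (1, i))
          + (a * x (Sum.inl (2, i)) + b * y (Sum.inl (2, i)))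
        = a * (x (Sum.inl (1, i)) + x (Sum.inl (2, i)))
          + b * (y (Sum.inl (1, i)) + y (Sum.inl (2, i))) := by ring
      _ = ∑ j ∈ Nbr E i, (a * x (Sum.inr (Sum.inl (i, j))) + b * y (Sum.inr (Sum.inl (i, j)))) := by
          rw [h1, h2, Finset.mul_sum, Finset.mul_sum, ← Finset.sum_add_distrib]
  · intro j hj
    have h1 := hx4 j hj
    have h2 := hy4 j hj
    simp only [heval]
    calc ∑ i ∈ Nbr' E j, (a * x (Sum.inr (Sum.inl (i, j))) + b * y (Sum.inr (Sum.inl (i, j))))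
        = a * (∑ i ∈ Nbr' E j, x (Sum.inr (Sum.inl (i, j))))
          + b * (∑ i ∈ Nbr' E j, y (Sum.inr (Sum.inl (i, j)))) := by
          rw [Finset.mul_sum, Finset.mul_sum, ← Finset.sum_add_distrib]
      _ = _ := by rw [h1, h2]; ring
  · simp only [heval]
    calc ∑ i ∈ Finset.Icc 1 n, (a * x (Sum.inl (1, i)) + b * y (Sum.inl (1, i))
          + (a * x (Sum.inl (2, i)) + b * y (Sum.inl (2, i))))
        = a * (∑ i ∈ Finset.Icc 1 n, (x (Sum.inl (1, i)) + x (Sum.inl (2, i))))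
          + b * (∑ i ∈ Finset.Icc 1 n, (y (Sum.inl (1, i)) + y (Sum.inl (2, i)))) := by
          rw [Finset.mul_sum, Finset.mul_sum, ← Finset.sum_add_distrib]
          apply Finset.sum_congr rfl
          intros; ring
      _ = 1 := by rw [hx5, hy5]; linarith

lemma routeVec_mem_flow (hE : ∀ p ∈ E, 1 ≤ p.1 ∧ p.1 ≤ n ∧ 1 ≤ p.2 ∧ p.2 ≤ m)
    {r : Route} (hr : IsRoute E r) : routeVec r ∈ FlowPolytope n m E := by
  obtain ⟨a, p, c⟩ := r
  obtain ⟨ha, hp, hc⟩ := hr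
  have ha' : a = 1 ∨ a = 2 := ha
  have hp' : p ∈ E := hp
  have hc' : c = 1 ∨ c = 2 := hc
  have hiE := hE p hp'
  have hi1 : p.1 ∈ Finset.Icc 1 n := Finset.mem_Icc.mpr ⟨hiE.1, hiE.2.1⟩
  have hj1 : p.2 ∈ Finset.Icc 1 m := Finset.mem_Icc.mpr ⟨hiE.2.2.1, hiE.2.2.2⟩
  have hLa : ∀ i' : ℕ, routeVec (a, p, c) (Sum.inl (1, i')) + routeVec (a, p, c) (Sum.inl (2, i'))
      = if i' = p.1 then 1 else 0 := by
    intro i'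
    simp only [routeVec_inl]
    rcases ha' with rfl | rfl <;> by_cases hii : i' = p.1 <;>
      norm_num [Prod.ext_iff, hii]
  have hLc : ∀ j' : ℕ, routeVec (a, p, c) (Sum.inr (Sum.inr (j', 1)))
      + routeVec (a, p, c) (Sum.inr (Sum.inr (j', 2))) = if j' = p.2 then 1 else 0 := by
    intro j'
    simp only [routeVec_gamma]
    rcases hc' with rfl | rfl <;> by_cases hjj : j' = p.2 <;>
      norm_num [Prod.ext_iff, hjj]
  have hRa : ∀ i' : ℕ, ∑ j ∈ Nbr E i', routeVec (a, p, c) (Sum.inr (Sum.inl (i', j)))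
      = if i' = p.1 then 1 else 0 := by
    intro i'
    simp only [routeVec_beta]
    by_cases hii : i' = p.1
    · subst hii
      rw [if_pos rfl, Finset.sum_eq_single_of_mem p.2 (mem_Nbr.mpr (by rwa [Prod.mk.eta]))]
      · rw [if_pos (Prod.mk.eta)]
      · intro j hj hne
        rw [if_neg]
        intro h
        exact hne (congrArg Prod.snd h)
    · rw [if_neg hii]
      apply Finset.sum_eq_zero
      intro j hj
      rw [if_neg]
      intro h
      exact hii (congrArg Prod.fst h)
  have hRc : ∀ j' : ℕ, ∑ i ∈ Nbr' E j', routeVec (a, p, c) (Sum.inr (Sum.inl (i, j')))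
      = if j' = p.2 then 1 else 0 := by
    intro j'
    simp only [routeVec_beta]
    by_cases hjj : j' = p.2
    · subst hjj
      rw [if_pos rfl, Finset.sum_eq_single_of_mem p.1 (mem_Nbr'.mpr (by rwa [Prod.mk.eta]))]
      · rw [if_pos (Prod.mk.eta)]
      · intro i hi hne
        rw [if_neg]
        intro h
        exact hne (congrArg Prod.fst h)
    · rw [if_neg hjj]
      apply Finset.sum_eq_zero
      intro i hi
      rw [if_neg]
      intro h
      exact hjj (congrArg Prod.snd h)
  refine ⟨?_, ?_, ?_, ?_, ?_⟩
  · intro e _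
    unfold routeVec
    split <;> norm_num
  · intro e hne
    unfold routeVec
    split
    case isTrue h =>
      exfalso
      rcases h with h | h | h <;> subst h
      · exact hne ⟨ha', hi1⟩
      · exact hne hp'
      · exact hne ⟨hj1, hc'⟩
    case isFalse h => rfl
  · intro i' _
    rw [hLa i', hRa i']
  · intro j' _
    rw [hLc j', hRc j']
  · rw [Finset.sum_congr rfl (fun i' _ => hLa i'), Finset.sum_ite_eq' (Finset.Icc 1 n) p.1
      (fun _ => (1 : ℝ)), if_pos hi1]

end Poly

-- ==== chunk 7 ====
section Glue

variable {E : Finset (ℕ × ℕ)} {n m : ℕ}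

lemma clique_extend {C : Set Route} (hC : IsClique E C) :
    ∃ D : Set Route, IsMaxClique E D ∧ C ⊆ D := by
  obtain ⟨D, hsub, hmax⟩ := zorn_subset_nonempty {S : Set Route | IsClique E S}
    (fun c hcS hchain _ => by
      refine ⟨⋃₀ c, ?_, fun s hs => Set.subset_sUnion_of_mem hs⟩
      constructor
      · rintro r ⟨s, hs, hrs⟩
        exact (hcS hs).1 r hrs
      · rintro r ⟨s₁, hs₁, hrs₁⟩ r' ⟨s₂, hs₂, hrs₂⟩ hne
        rcases hchain.total hs₁ hs₂ with h | h
        · exact (hcS hs₂).2 r (h hrs₁) r' hrs₂ hne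
        · exact (hcS hs₁).2 r hrs₁ r' (h hrs₂) hne) C hC
  refine ⟨D, ⟨hmax.1, fun C' hC' hsub' => Set.Subset.antisymm (hmax.2 hC' hsub') hsub'⟩, hsub⟩

lemma mem_hull_iff {C : Set Route} (hCr : ∀ r ∈ C, IsRoute E r) (x : GEdge → ℝ) :
    x ∈ convexHull ℝ (routeVec '' C) ↔
      ∃ w : Route → ℝ, (∀ r, 0 ≤ w r) ∧ (∀ r, w r ≠ 0 → r ∈ C) ∧
        (∑ r ∈ RFin E, w r = 1) ∧ mix E w = x := by
  classical
  have himg : routeVec '' C = ↑(((RFin E).filter (· ∈ C)).image routeVec) := by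
    ext y
    simp only [Set.mem_image, Finset.coe_image, Finset.mem_coe, Finset.mem_filter, mem_RFin]
    constructor
    · rintro ⟨r, hr, rfl⟩
      exact ⟨r, ⟨hCr r hr, hr⟩, rfl⟩
    · rintro ⟨r, ⟨_, hr⟩, rfl⟩
      exact ⟨r, hr, rfl⟩
  have hinj : ∀ r ∈ (RFin E).filter (· ∈ C), ∀ r' ∈ (RFin E).filter (· ∈ C),
      routeVec r = routeVec r' → r = r' := fun r _ r' _ h => routeVec_injective h
  constructor
  · intro hx
    rw [himg, Finset.convexHull_eq] at hx
    obtain ⟨wv, hw0, hw1, hwx⟩ := hx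
    rw [Finset.centerMass_eq_of_sum_1 _ id hw1] at hwx
    refine ⟨fun r => if r ∈ (RFin E).filter (· ∈ C) then wv (routeVec r) else 0, ?_, ?_, ?_, ?_⟩
    · intro r
      dsimp only
      split_ifs with h
      · exact hw0 _ (Finset.mem_image_of_mem _ h)
      · exact le_refl 0
    · intro r hr
      dsimp only at hr
      split_ifs at hr with h
      · exact (Finset.mem_filter.mp h).2
      · exact absurd rfl hr
    · rw [Finset.sum_ite_mem, Finset.inter_eq_right.mpr (Finset.filter_subset _ _), ← hw1,
        Finset.sum_image hinj]
    · rw [← hwx, mix]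
      rw [Finset.sum_image hinj]
      rw [← Finset.sum_filter_add_sum_filter_not (RFin E) (· ∈ (RFin E).filter (· ∈ C))]
      have hz : ∑ r ∈ (RFin E).filter (fun r => ¬ r ∈ (RFin E).filter (· ∈ C)),
          (if r ∈ (RFin E).filter (· ∈ C) then wv (routeVec r) else 0) • routeVec r = 0 := by
        apply Finset.sum_eq_zero
        intro r hr
        rw [if_neg (Finset.mem_filter.mp hr).2, zero_smul]
      rw [hz, add_zero]
      have hff : (RFin E).filter (fun r => r ∈ (RFin E).filter (· ∈ C))
          = (RFin E).filter (· ∈ C) := by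
        ext r
        simp only [Finset.mem_filter]
        tauto
      rw [hff]
      apply Finset.sum_congr rfl
      intro r hr
      rw [if_pos hr]
      rfl
  · rintro ⟨w, hw0, hsupp, hsum, rfl⟩
    set t := (RFin E).filter (fun r => w r ≠ 0) with ht
    have hsum_t : ∑ r ∈ t, w r = ∑ r ∈ RFin E, w r := by
      apply Finset.sum_subset (Finset.filter_subset _ _)
      intro r hr hrt
      rw [Finset.mem_filter] at hrt
      by_contra hne
      exact hrt ⟨hr, hne⟩
    have hmix : mix E w = t.centerMass w routeVec := by
      rw [Finset.centerMass_eq_of_sum_1 _ _ (hsum_t.trans hsum), mix]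
      symm
      apply Finset.sum_subset (Finset.filter_subset _ _)
      intro r hr hrt
      rw [Finset.mem_filter] at hrt
      have : w r = 0 := by
        by_contra hne
        exact hrt ⟨hr, hne⟩
      rw [this, zero_smul]
    rw [hmix]
    apply Finset.centerMass_mem_convexHull t (fun r _ => hw0 r)
      (by rw [hsum_t, hsum]; norm_num)
    intro r hrt
    exact Set.mem_image_of_mem _ (hsupp r (Finset.mem_filter.mp hrt).2)

lemma max_sub_max (a : ℝ) : max a 0 - max (-a) 0 = a := by
  rcases le_total a 0 with h | h
  · rw [max_eq_right h, max_eq_left (by linarith)]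
    ring
  · rw [max_eq_left h, max_eq_right (by linarith)]
    ring

end Glue

-- ==== final theorem ====
/-- The DKK clique simplices of the canonical bipartite framing triangulate
the flow polytope `F₁(G(H))`. -/
theorem dkk_triangulation (n m : ℕ) (hn : 1 ≤ n) (hm : 1 ≤ m) (E : Finset (ℕ × ℕ))
    (hE : ∀ p ∈ E, 1 ≤ p.1 ∧ p.1 ≤ n ∧ 1 ≤ p.2 ∧ p.2 ≤ m)
    (hdegS : ∀ i ∈ Finset.Icc 1 n, 2 ≤ (Nbr E i).card)
    (hdegT : ∀ j ∈ Finset.Icc 1 m, 2 ≤ (Nbr' E j).card) :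
    (∀ C : Set Route, IsClique E C →
      AffineIndependent ℝ (fun r : {r : Route // r ∈ C} => routeVec (r : Route))) ∧
    (FlowPolytope n m E =
      ⋃ C ∈ {C : Set Route | IsMaxClique E C}, convexHull ℝ (routeVec '' C)) ∧
    (∀ C C' : Set Route, IsClique E C → IsClique E C' →
      convexHull ℝ (routeVec '' C) ∩ convexHull ℝ (routeVec '' C') =
        convexHull ℝ (routeVec '' (C ∩ C'))) := by
  classical
  refine ⟨?_, ?_, ?_⟩
  · -- (i) affine independence of clique simplices
    intro C hC
    rw [affineIndependent_iff]
    intro s wt hsum0 hcomb0 k0 hk0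
    set W : Route → ℝ := fun ρ => ∑ k ∈ s.filter (fun k => k.1 = ρ), wt k with hW
    have hWcoe : ∀ k ∈ s, W (k : Route) = wt k := by
      intro k hk
      rw [hW]
      dsimp only
      have hfe : s.filter (fun k' => k'.1 = k.1) = {k} := by
        ext k'
        simp only [Finset.mem_filter, Finset.mem_singleton]
        constructor
        · rintro ⟨_, h2⟩
          exact Subtype.ext h2
        · rintro rfl
          exact ⟨hk, rfl⟩
      rw [hfe, Finset.sum_singleton]
    set T := s.image (fun k : {r : Route // r ∈ C} => k.1) with hT
    have hinjs : ∀ k ∈ s, ∀ k' ∈ s, k.1 = k'.1 → k = k' :=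
      fun k _ k' _ h => Subtype.ext h
    have hWzero : ∀ ρ, ρ ∉ T → W ρ = 0 := by
      intro ρ hρ
      rw [hW]
      dsimp only
      rw [Finset.filter_eq_empty_iff.mpr (fun k hk h => hρ (Finset.mem_image.mpr ⟨k, hk, h⟩)),
        Finset.sum_empty]
    have hTC : ∀ ρ ∈ T, ρ ∈ C := by
      intro ρ hρ
      obtain ⟨k, _, rfl⟩ := Finset.mem_image.mp hρ
      exact k.2
    have hTR : T ⊆ RFin E := fun ρ hρ => mem_RFin.mpr (hC.1 ρ (hTC ρ hρ))
    have hsummix : mix E W = 0 := by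
      rw [mix, ← Finset.sum_subset hTR (fun ρ _ hρ => by rw [hWzero ρ hρ, zero_smul]),
        hT, Finset.sum_image hinjs, Finset.sum_congr rfl (fun k hk => by rw [hWcoe k hk])]
      exact hcomb0
    set Wp : Route → ℝ := fun ρ => max (W ρ) 0 with hWp
    set Wm : Route → ℝ := fun ρ => max (-W ρ) 0 with hWm
    have hWpm : ∀ ρ, Wp ρ = W ρ + Wm ρ := by
      intro ρ
      rw [hWp, hWm]
      dsimp only
      have := max_sub_max (W ρ)
      linarith
    have hmixpm : mix E Wp = mix E Wm := by
      rw [mix, mix, Finset.sum_congr rfl (fun ρ _ => by rw [hWpm ρ, add_smul]),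
        Finset.sum_add_distrib, show ∑ ρ ∈ RFin E, W ρ • routeVec ρ = mix E W from rfl,
        hsummix, zero_add]
    have hWp0 : ∀ ρ, 0 ≤ Wp ρ := fun ρ => le_max_right _ _
    have hWm0 : ∀ ρ, 0 ≤ Wm ρ := fun ρ => le_max_right _ _
    have hWpsupp : ∀ ρ, Wp ρ ≠ 0 → ρ ∈ C := by
      intro ρ h
      by_cases hρ : ρ ∈ T
      · exact hTC ρ hρ
      · exfalso
        apply h
        rw [hWp]
        dsimp only
        rw [hWzero ρ hρ]
        norm_num
    have hWmsupp : ∀ ρ, Wm ρ ≠ 0 → ρ ∈ C := by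
      intro ρ h
      by_cases hρ : ρ ∈ T
      · exact hTC ρ hρ
      · exfalso
        apply h
        rw [hWm]
        dsimp only
        rw [hWzero ρ hρ]
        norm_num
    have h1 := lam_unique hC hWp0 hWpsupp
    have h2 := lam_unique hC hWm0 hWmsupp
    have hWeq : ∀ r ∈ RFin E, W r = 0 := by
      intro r hr
      have e1 := h1 r hr
      have e2 := h2 r hr
      rw [hmixpm] at e1
      have := hWpm r
      linarith [e1, e2]
    have hk0R : (k0 : Route) ∈ RFin E := mem_RFin.mpr (hC.1 _ k0.2)
    rw [← hWcoe k0 hk0]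
    exact hWeq _ hk0R
  · -- (ii) union of maximal clique simplices
    ext x
    simp only [Set.mem_iUnion, Set.mem_setOf_eq, exists_prop]
    constructor
    · intro hx
      obtain ⟨D, hD, hsub⟩ := clique_extend (exist_clique hx)
      refine ⟨D, hD, ?_⟩
      rw [mem_hull_iff hD.1.1 x]
      exact ⟨lam E x, lam_nonneg E x hx, fun r h => hsub h, exist_sum hE hx, exist_decomp hE hx⟩
    · rintro ⟨D, hD, hx⟩
      refine convexHull_min ?_ flow_convex hx
      rintro y ⟨r, hr, rfl⟩
      exact routeVec_mem_flow hE (hD.1.1 r hr)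
  · -- (iii) intersection property
    intro C C' hC hC'
    apply Set.Subset.antisymm
    · rintro x ⟨hx1, hx2⟩
      obtain ⟨w1, h10, h1s, h1sum, h1mix⟩ := (mem_hull_iff hC.1 x).mp hx1
      obtain ⟨w2, h20, h2s, h2sum, h2mix⟩ := (mem_hull_iff hC'.1 x).mp hx2
      have e1 := lam_unique hC h10 h1s
      have e2 := lam_unique hC' h20 h2s
      have hmm : mix E w2 = mix E w1 := by rw [h1mix, h2mix]
      have heq : ∀ r ∈ RFin E, w1 r = w2 r := by
        intro r hr
        rw [e1 r hr, e2 r hr, hmm]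
      rw [mem_hull_iff (fun r hr => hC.1 r hr.1) x]
      refine ⟨w1, h10, ?_, h1sum, h1mix⟩
      intro r h
      have hrC : r ∈ C := h1s r h
      have hrR : r ∈ RFin E := mem_RFin.mpr (hC.1 r hrC)
      exact ⟨hrC, h2s r (heq r hrR ▸ h)⟩
    · exact Set.subset_inter
        (convexHull_mono (Set.image_mono Set.inter_subset_left))
        (convexHull_mono (Set.image_mono Set.inter_subset_right))
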